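/- Let m, n, p be positive integers with p > m+1 and n ≥ p, and let α, β be positive reals satisfying α·(n−p+2m+1) ≤ 2·(p−m−1)·β. Then for all reals f₁ > f₂ > ⋯ > f_m > 0, setting g_i = 1/(1+β·f_i), the following holds for every index i: (n−p+2m−3)·f_i·α²·g_i² − 2·(p−m+1)·α·g_i + 4·α²·β·f_i²·g_i³ + 4·α·β·f_i·g_i² − 2·∑_{j≠i} (α²·f_i²·g_i² − α²·f_i·f_j·g_i·g_j + α·f_i·g_i − α·f_j·g_j)/(f_i − f_j) ≤ 0. -/

import Mathlib

/-- Theorem 4.1(i) (deterministic content): for `p > m+1`, `n ≥ p`, and positive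
`α, β` with `α(n−p+2m+1) ≤ 2(p−m−1)β`, each diagonal entry `φ*ᵢ` of the unbiased
estimate of the matrix-quadratic risk difference of the shrinkage estimator is
nonpositive. -/
theorem stmt_7 (m n p : ℕ) (hm : 0 < m) (hp : p > m + 1) (hn : n ≥ p)
    (α β : ℝ) (hα : 0 < α) (hβ : 0 < β)
    (hαβ : α * ((n : ℝ) - p + 2 * m + 1) ≤ 2 * ((p : ℝ) - m - 1) * β)
    (f : Fin m → ℝ) (hfpos : ∀ i, 0 < f i) (hfdec : ∀ i j : Fin m, i < j → f j < f i)
    (g : Fin m → ℝ) (hg : ∀ i, g i = 1 / (1 + β * f i)) :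
    ∀ i : Fin m,
      ((n : ℝ) - p + 2 * m - 3) * f i * α ^ 2 * g i ^ 2
        - 2 * ((p : ℝ) - m + 1) * α * g i
        + 4 * α ^ 2 * β * f i ^ 2 * g i ^ 3
        + 4 * α * β * f i * g i ^ 2
        - 2 * ∑ j ∈ Finset.univ.erase i,
            (α ^ 2 * f i ^ 2 * g i ^ 2 - α ^ 2 * f i * f j * g i * g j
              + α * f i * g i - α * f j * g j) / (f i - f j) ≤ 0 := by
  intro i
  have hpos1 : ∀ k : Fin m, 0 < 1 + β * f k := by
    intro k; nlinarith [hfpos k, hβ]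
  have hgpos : ∀ k : Fin m, 0 < g k := by
    intro k; rw [hg]; exact div_pos one_pos (hpos1 k)
  have hgle : ∀ k : Fin m, g k ≤ 1 := by
    intro k; rw [hg, div_le_one (hpos1 k)]; nlinarith [hfpos k, hβ]
  have hkey : ∀ k : Fin m, β * f k * g k = 1 - g k := by
    intro k
    have h := (hpos1 k).ne'
    rw [hg]
    field_simp
    ring
  -- the sum is nonnegative
  have hsum : 0 ≤ ∑ j ∈ Finset.univ.erase i,
      (α ^ 2 * f i ^ 2 * g i ^ 2 - α ^ 2 * f i * f j * g i * g j
        + α * f i * g i - α * f j * g j) / (f i - f j) := by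
    apply Finset.sum_nonneg
    intro j hj
    have hji : j ≠ i := Finset.ne_of_mem_erase hj
    have hij : f i ≠ f j := by
      rcases lt_or_gt_of_ne (Ne.symm hji) with h | h
      · exact ne_of_gt (hfdec i j h)
      · exact ne_of_lt (hfdec j i h)
    have hdiff : f i * g i - f j * g j = (f i - f j) * (g i * g j) := by
      linear_combination (-(f i * g i)) * hkey j + (f j * g j) * hkey i
    have heq : (α ^ 2 * f i ^ 2 * g i ^ 2 - α ^ 2 * f i * f j * g i * g j
        + α * f i * g i - α * f j * g j) / (f i - f j)
        = α * (α * f i * g i + 1) * (g i * g j) := by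
      rw [div_eq_iff (sub_ne_zero_of_ne hij)]
      linear_combination (α * (α * f i * g i + 1)) * hdiff
    rw [heq]
    have h1 : 0 ≤ α * f i * g i + 1 := by
      nlinarith [mul_pos (mul_pos hα (hfpos i)) (hgpos i)]
    have h2 : 0 ≤ g i * g j := mul_nonneg (hgpos i).le (hgpos j).le
    positivity
  -- the remaining part is nonpositive
  set c : ℝ := (n : ℝ) - p + 2 * m + 1 with hc
  have hc3 : (3:ℝ) ≤ c := by
    have h1 : (p : ℝ) ≤ (n : ℝ) := by exact_mod_cast hn
    have h2 : (1 : ℝ) ≤ (m : ℝ) := by exact_mod_cast hm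
    simp only [hc]; linarith
  have hu0 : 0 ≤ α * f i * g i :=
    mul_nonneg (mul_nonneg hα.le (hfpos i).le) (hgpos i).le
  have hu : c * (α * f i * g i) ≤ 2 * ((p : ℝ) - m - 1) := by
    have h1 : β * (α * f i * g i) = α * (1 - g i) := by
      have := hkey i; nlinarith [this]
    have hG : 0 ≤ g i := (hgpos i).le
    have hcnn : (0:ℝ) ≤ c := by linarith
    have h1c : c * (α * f i * g i) * β = c * α - c * α * g i := by
      linear_combination c * h1
    have h2 : c * (α * f i * g i) * β ≤ 2 * ((p : ℝ) - m - 1) * β := by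
      nlinarith [h1c, hαβ, mul_nonneg (mul_nonneg hcnn hα.le) hG]
    exact le_of_mul_le_mul_right h2 hβ
  have hB : (c - 4) * (α * f i * g i) + 4 * (α * f i * g i) * (1 - g i)
      + 4 * (1 - g i) - 2 * ((p : ℝ) - m + 1) ≤ 0 := by
    nlinarith [hu, hu0, hgle i, hgpos i,
      mul_nonneg hu0 (hgpos i).le]
  have hA : ((n : ℝ) - p + 2 * m - 3) * f i * α ^ 2 * g i ^ 2
      - 2 * ((p : ℝ) - m + 1) * α * g i
      + 4 * α ^ 2 * β * f i ^ 2 * g i ^ 3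
      + 4 * α * β * f i * g i ^ 2
      = α * g i * ((c - 4) * (α * f i * g i) + 4 * (α * f i * g i) * (1 - g i)
        + 4 * (1 - g i) - 2 * ((p : ℝ) - m + 1)) := by
    simp only [hc]
    linear_combination (4 * α ^ 2 * f i * g i ^ 2 + 4 * α * g i) * hkey i
  have hAle : ((n : ℝ) - p + 2 * m - 3) * f i * α ^ 2 * g i ^ 2
      - 2 * ((p : ℝ) - m + 1) * α * g i
      + 4 * α ^ 2 * β * f i ^ 2 * g i ^ 3
      + 4 * α * β * f i * g i ^ 2 ≤ 0 := by
    rw [hA]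
    exact mul_nonpos_of_nonneg_of_nonpos (mul_nonneg hα.le (hgpos i).le) hB
  linarith [hsum, hAle]
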